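/- Let g₁, …, gₙ ∈ ℝ^k with max_i ‖gᵢ‖ ≤ Z, let w₁, …, wₙ ≥ 0 with ∑wᵢ = 1, and suppose α ∈ ℝ^k satisfies 1 + α^T gᵢ > 0 for all i with wᵢ > 0 and ∑ᵢ wᵢ gᵢ/(1 + α^T gᵢ) = 0. Write α = ρ v with ‖v‖ = 1, ρ = ‖α‖ ≥ 0. Then ρ · (v^T V v)/(1 + ρ Z) ≤ ‖A‖, where A = ∑ᵢ wᵢ gᵢ and V = ∑ᵢ wᵢ gᵢ gᵢ^T. Consequently, if v^T V v > ‖A‖·Z, then ρ ≤ ‖A‖/(v^T V v − ‖A‖ Z). -/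

import Mathlib

open MeasureTheory RealInnerProductSpace

private lemma stmt9_aux (w t ρ : ℝ) (h : 1 + ρ * t ≠ 0) :
    w * t - w / (1 + ρ * t) * t = ρ * (w * t ^ 2) / (1 + ρ * t) := by
  rw [eq_div_iff h, sub_mul, div_mul_eq_mul_div, div_mul_cancel₀ _ h]
  ring

/-- Owen-type bound on the empirical likelihood Lagrange multiplier: if
`α = ρ v` (`‖v‖ = 1`, `ρ = ‖α‖`) satisfies `1 + αᵀgᵢ > 0` (for `wᵢ > 0`) and
`∑ᵢ wᵢ gᵢ/(1 + αᵀgᵢ) = 0`, then `ρ (vᵀ V v)/(1 + ρ Z) ≤ ‖A‖`, and if moreover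
`vᵀ V v > ‖A‖ Z` then `ρ ≤ ‖A‖/(vᵀ V v − ‖A‖ Z)`. -/
theorem stmt9 {k n : ℕ} (g : Fin n → EuclideanSpace ℝ (Fin k))
    (w : Fin n → ℝ) (hw : ∀ i, 0 ≤ w i) (hw1 : ∑ i, w i = 1)
    (Z : ℝ) (hZ : 0 ≤ Z) (hgZ : ∀ i, ‖g i‖ ≤ Z)
    (α v : EuclideanSpace ℝ (Fin k)) (ρ : ℝ) (hv : ‖v‖ = 1) (hρ : ρ = ‖α‖)
    (hαv : α = ρ • v)
    (hpos : ∀ i, 0 < w i → 0 < 1 + ⟪α, g i⟫)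
    (hEL : ∑ i, (w i / (1 + ⟪α, g i⟫)) • g i = 0)
    (A : EuclideanSpace ℝ (Fin k)) (hA : A = ∑ i, w i • g i)
    (Vq : ℝ) (hVq : Vq = ∑ i, w i * ⟪v, g i⟫ ^ 2) :
    ρ * Vq / (1 + ρ * Z) ≤ ‖A‖ ∧
      (‖A‖ * Z < Vq → ρ ≤ ‖A‖ / (Vq - ‖A‖ * Z)) := by
  have hρ0 : 0 ≤ ρ := hρ ▸ norm_nonneg α
  have hden : (0:ℝ) < 1 + ρ * Z := by positivity
  have hd : ∀ i, ⟪α, g i⟫ = ρ * ⟪v, g i⟫ := by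
    intro i; rw [hαv, real_inner_smul_left]
  have hdle : ∀ i, ⟪α, g i⟫ ≤ ρ * Z := by
    intro i
    rw [hd]
    have h1 : ⟪v, g i⟫ ≤ ‖g i‖ := by
      have := real_inner_le_norm v (g i)
      rwa [hv, one_mul] at this
    nlinarith [hgZ i]
  have h0 : ∑ i, (w i / (1 + ⟪α, g i⟫)) * ⟪v, g i⟫ = 0 := by
    have := congrArg (fun x => ⟪v, x⟫) hEL
    simpa only [inner_sum, real_inner_smul_right, inner_zero_right] using this
  have hvA : ⟪v, A⟫ = ∑ i, w i * ⟪v, g i⟫ := by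
    rw [hA]; simp only [inner_sum, real_inner_smul_right]
  have key : ⟪v, A⟫ = ∑ i, ρ * (w i * ⟪v, g i⟫ ^ 2) / (1 + ⟪α, g i⟫) := by
    rw [hvA, ← sub_zero (∑ i, w i * ⟪v, g i⟫), ← h0, ← Finset.sum_sub_distrib]
    refine Finset.sum_congr rfl fun i _ => ?_
    rcases (hw i).lt_or_eq with hwi | hwi
    · have hne : (1 + ⟪α, g i⟫) ≠ 0 := ne_of_gt (hpos i hwi)
      rw [hd i] at hne ⊢
      exact stmt9_aux (w i) ⟪v, g i⟫ ρ hne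
    · simp [← hwi]
  have bound : ρ * Vq / (1 + ρ * Z) ≤ ⟪v, A⟫ := by
    rw [key, hVq, Finset.mul_sum, Finset.sum_div]
    refine Finset.sum_le_sum fun i _ => ?_
    rcases (hw i).lt_or_eq with hwi | hwi
    · have h1 : 0 < 1 + ⟪α, g i⟫ := hpos i hwi
      have h2 : 1 + ⟪α, g i⟫ ≤ 1 + ρ * Z := by linarith [hdle i]
      have h3 : 0 ≤ ρ * (w i * ⟪v, g i⟫ ^ 2) := by positivity
      exact div_le_div_of_nonneg_left h3 h1 h2
    · simp [← hwi]
  have hvAle : ⟪v, A⟫ ≤ ‖A‖ := by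
    have := real_inner_le_norm v A
    rwa [hv, one_mul] at this
  have main : ρ * Vq / (1 + ρ * Z) ≤ ‖A‖ := le_trans bound hvAle
  refine ⟨main, fun hlt => ?_⟩
  have hpos' : 0 < Vq - ‖A‖ * Z := by linarith
  rw [le_div_iff₀ hpos']
  have h4 : ρ * Vq ≤ ‖A‖ * (1 + ρ * Z) := by
    have := (div_le_iff₀ hden).mp main
    linarith
  nlinarith
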